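/- (Freedman's inequality) Let d₁, …, d_T be a martingale difference sequence adapted to a filtration, with |d_i| ≤ b almost surely. Let V_s = Σ_{i=1}^s Var(d_i | F_{i−1}). Then for every a, v > 0, P(∃ s ≤ T : Σ_{i=1}^s d_i ≥ a and V_s ≤ v) ≤ exp(−a²/(2(v + b a))). -/

import Mathlib

open MeasureTheory Finset


lemma aux_exp1 {t : ℝ} (ht : 0 ≤ t) : 2 * (1 - t) * Real.exp t ≤ 2 - t ^ 2 := by
  have key : MonotoneOn (fun t : ℝ => 2 - t ^ 2 - 2 * (1 - t) * Real.exp t) (Set.Ici 0) := by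
    refine monotoneOn_of_deriv_nonneg (convex_Ici 0) (by fun_prop) ?_ ?_
    · fun_prop
    · intro x hx
      rw [interior_Ici] at hx
      have hx : (0:ℝ) < x := hx
      have h1 : HasDerivAt (fun t : ℝ => 2 - t ^ 2 - 2 * (1 - t) * Real.exp t)
          (-(2 * x) - ((2 * (-1)) * Real.exp x + 2 * (1 - x) * Real.exp x)) x := by
        have := ((hasDerivAt_id x).const_sub 1 |>.const_mul 2).mul (Real.hasDerivAt_exp x)
        have h2 := (hasDerivAt_pow 2 x).const_sub 2
        exact (h2.sub this).congr_deriv (by simp)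
      rw [h1.deriv]
      have := Real.one_le_exp hx.le
      nlinarith [Real.exp_pos x]
  have h := key (Set.self_mem_Ici) ht ht
  simp at h
  nlinarith

lemma aux_exp2 {y : ℝ} (hy : y ≤ 0) : Real.exp y ≤ 1 + y + y ^ 2 / 2 := by
  have key : AntitoneOn (fun y : ℝ => 1 + y + y ^ 2 / 2 - Real.exp y) (Set.Iic 0) := by
    refine antitoneOn_of_deriv_nonpos (convex_Iic 0) (by fun_prop) (by fun_prop) ?_
    intro x hx
    rw [interior_Iic] at hx
    have h1 : HasDerivAt (fun y : ℝ => 1 + y + y ^ 2 / 2 - Real.exp y)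
        (0 + 1 + 2 * x / 2 - Real.exp x) x := by
      have := ((hasDerivAt_const x (1:ℝ)).add (hasDerivAt_id x)).add
        ((hasDerivAt_pow 2 x).div_const 2)
      exact (this.sub (Real.hasDerivAt_exp x)).congr_deriv (by simp)
    rw [h1.deriv]
    have := Real.add_one_le_exp x
    linarith
  have h := key hy (Set.self_mem_Iic) hy
  simp at h
  linarith

lemma aux_exp3 {y β : ℝ} (hy : |y| ≤ β) (hβ : β < 1) :
    Real.exp y ≤ 1 + y + y ^ 2 / (2 * (1 - β)) := by
  have hβ0 : 0 ≤ β := le_trans (abs_nonneg y) hy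
  have h1β : 0 < 1 - β := by linarith
  rcases le_or_gt y 0 with h | h
  · have := aux_exp2 h
    have : y ^ 2 / 2 ≤ y ^ 2 / (2 * (1 - β)) := by
      apply div_le_div_of_nonneg_left (by positivity) (by linarith) (by linarith)
    linarith [aux_exp2 h]
  · have hy1 : y < 1 := lt_of_le_of_lt (le_trans (le_abs_self y) hy) hβ
    have hyβ : y ≤ β := le_trans (le_abs_self y) hy
    have h2 := aux_exp1 h.le
    have h3 : Real.exp y ≤ (2 - y ^ 2) / (2 * (1 - y)) := by
      rw [le_div_iff₀ (by linarith)]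
      linarith
    refine h3.trans ?_
    have heq : (2 - y ^ 2) / (2 * (1 - y)) = 1 + y + y ^ 2 / (2 * (1 - y)) := by
      have hne : (1:ℝ) - y ≠ 0 := by linarith
      field_simp
      ring
    rw [heq]
    have : y ^ 2 / (2 * (1 - y)) ≤ y ^ 2 / (2 * (1 - β)) :=
      div_le_div_of_nonneg_left (sq_nonneg y) (by linarith) (by linarith)
    linarith


lemma supermartingale_maximal {Ω : Type*} {m0 : MeasurableSpace Ω} {μ : Measure Ω}
    [IsProbabilityMeasure μ] {𝒢 : Filtration ℕ m0} {M : ℕ → Ω → ℝ}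
    (hM : Supermartingale M 𝒢 μ) (hnonneg : ∀ s, 0 ≤ᵐ[μ] M s) (T : ℕ) {ε : ℝ} (hε : 0 < ε) :
    ε * (μ {ω | ∃ s ≤ T, ε ≤ M s ω}).toReal ≤ ∫ ω, M 0 ω ∂μ := by
  set τ : Ω → WithTop ℕ := fun ω => ((hittingBtwn M (Set.Ici ε) 0 T ω : ℕ) : WithTop ℕ) with hτdef
  have hτ : IsStoppingTime 𝒢 τ := Adapted.isStoppingTime_hittingBtwn (fun i => (hM.stronglyAdapted i).measurable) measurableSet_Ici
  have hτ_le : ∀ ω, τ ω ≤ T := fun ω => WithTop.coe_le_coe.2 (hittingBtwn_le ω)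
  have hsub : Submartingale (-M) 𝒢 μ := hM.neg
  have key : (∫ ω, stoppedValue (-M) (fun _ => 0) ω ∂μ) ≤ ∫ ω, stoppedValue (-M) τ ω ∂μ :=
    hsub.expected_stoppedValue_mono (isStoppingTime_const 𝒢 0) hτ
      (fun ω => WithTop.coe_le_coe.2 (Nat.zero_le _)) hτ_le
  have hsv_neg : stoppedValue (-M) τ = -(stoppedValue M τ) := by
    funext ω; simp [stoppedValue]
  have hsv0 : stoppedValue (-M) (fun _ => 0) = -(M 0) := by
    funext ω; simp [stoppedValue]
  have hint : Integrable (stoppedValue M τ) μ := by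
    have := hsub.integrable_stoppedValue hτ hτ_le
    rw [hsv_neg] at this
    simpa using this.neg
  have hsv_nonneg : 0 ≤ᵐ[μ] stoppedValue M τ := by
    filter_upwards [ae_all_iff.2 hnonneg] with ω hω
    exact hω ((τ ω).untopA)
  have markov := mul_meas_ge_le_integral_of_nonneg hsv_nonneg hint ε
  have hsubset : {ω | ∃ s ≤ T, ε ≤ M s ω} ⊆ {ω | ε ≤ stoppedValue M τ ω} := by
    rintro ω ⟨s, hsT, hs⟩
    exact stoppedValue_hittingBtwn_mem ⟨s, ⟨Nat.zero_le s, hsT⟩, hs⟩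
  have hμ : (μ {ω | ∃ s ≤ T, ε ≤ M s ω}).toReal ≤
      (μ {ω | ε ≤ stoppedValue M τ ω}).toReal :=
    ENNReal.toReal_mono (measure_ne_top _ _) (measure_mono hsubset)
  have hfinal : ∫ ω, stoppedValue M τ ω ∂μ ≤ ∫ ω, M 0 ω ∂μ := by
    rw [hsv_neg, hsv0] at key
    have h1 : (∫ ω, (-(M 0)) ω ∂μ) = -∫ ω, M 0 ω ∂μ := integral_neg _
    have h2 : (∫ ω, (-(stoppedValue M τ)) ω ∂μ) = -∫ ω, stoppedValue M τ ω ∂μ := integral_neg _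
    rw [h1, h2] at key
    linarith
  calc ε * (μ {ω | ∃ s ≤ T, ε ≤ M s ω}).toReal
      ≤ ε * (μ {ω | ε ≤ stoppedValue M τ ω}).toReal := by
        exact mul_le_mul_of_nonneg_left hμ hε.le
    _ ≤ ∫ ω, stoppedValue M τ ω ∂μ := markov
    _ ≤ ∫ ω, M 0 ω ∂μ := hfinal

/-- Freedman's inequality for bounded martingale difference sequences. -/
theorem freedman_inequality
    {Ω : Type*} {m0 : MeasurableSpace Ω} (μ : Measure Ω) [IsProbabilityMeasure μ]
    (ℱ : Filtration ℕ m0)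
    (d : ℕ → Ω → ℝ) (T : ℕ) (b : ℝ) (hb : 0 < b)
    (hadp : ∀ i, StronglyMeasurable[ℱ (i + 1)] (d i))
    (hint : ∀ i, Integrable (d i) μ)
    (hmds : ∀ i, μ[d i | ℱ i] =ᵐ[μ] 0)
    (hbdd : ∀ i, ∀ᵐ ω ∂μ, |d i ω| ≤ b)
    (a v : ℝ) (ha : 0 < a) (hv : 0 < v) :
    μ {ω | ∃ s ≤ T, a ≤ ∑ i ∈ Finset.range s, d i ω ∧
        (∑ i ∈ Finset.range s, (μ[(fun ω' => (d i ω') ^ 2) | ℱ i]) ω) ≤ v}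
      ≤ ENNReal.ofReal (Real.exp (-a ^ 2 / (2 * (v + b * a)))) := by
  have hvb : 0 < v + b * a := by positivity
  set l : ℝ := a / (v + b * a) with hldef
  have hl : 0 < l := by positivity
  have hlb : l * b < 1 := by
    rw [hldef, div_mul_eq_mul_div, div_lt_one hvb]
    nlinarith
  have hlb0 : 0 < 1 - l * b := by linarith
  set c : ℝ := l ^ 2 / (2 * (1 - l * b)) with hcdef
  have hc : 0 < c := by positivity
  set E : ℕ → Ω → ℝ := fun i => μ[(fun ω' => (d i ω') ^ 2) | ℱ i] with hEdef
  set M : ℕ → Ω → ℝ := fun s ω =>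
    Real.exp (l * (∑ i ∈ Finset.range s, d i ω) - c * (∑ i ∈ Finset.range s, E i ω)) with hMdef
  -- basic measurability and integrability facts
  have hd_meas : ∀ i, StronglyMeasurable (d i) := fun i => (hadp i).mono (ℱ.le _)
  have hE_meas : ∀ i, StronglyMeasurable[ℱ i] (E i) := fun i => stronglyMeasurable_condExp
  have hE_nonneg : ∀ i, 0 ≤ᵐ[μ] E i := fun i =>
    condExp_nonneg (ae_of_all _ fun ω => sq_nonneg _)
  have hd2_int : ∀ i, Integrable (fun ω => (d i ω) ^ 2) μ := by
    intro i
    refine ⟨((hd_meas i).pow 2).aestronglyMeasurable, ?_⟩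
    refine HasFiniteIntegral.of_bounded (C := b ^ 2) ?_
    filter_upwards [hbdd i] with ω hω
    rw [Real.norm_eq_abs, abs_pow]
    exact pow_le_pow_left₀ (abs_nonneg _) hω 2
  have hM_adapted : StronglyAdapted ℱ M := by
    intro s
    have hS : StronglyMeasurable[ℱ s] fun ω => ∑ i ∈ Finset.range s, d i ω := by
      apply Finset.stronglyMeasurable_fun_sum
      intro i hi
      exact (hadp i).mono (ℱ.mono (Finset.mem_range.1 hi))
    have hV : StronglyMeasurable[ℱ s] fun ω => ∑ i ∈ Finset.range s, E i ω := by
      apply Finset.stronglyMeasurable_fun_sum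
      intro i hi
      exact (hE_meas i).mono (ℱ.mono (Finset.mem_range.1 hi).le)
    exact Real.continuous_exp.comp_stronglyMeasurable
      ((stronglyMeasurable_const.mul hS).sub (stronglyMeasurable_const.mul hV))
  have hM_meas : ∀ s, StronglyMeasurable (M s) := fun s => (hM_adapted s).mono (ℱ.le _)
  have hM_bound : ∀ s, ∀ᵐ ω ∂μ, M s ω ≤ Real.exp (l * b * s) := by
    intro s
    filter_upwards [ae_all_iff.2 hbdd, ae_all_iff.2 hE_nonneg] with ω h1 h2
    apply Real.exp_le_exp.2
    have hS : ∑ i ∈ Finset.range s, d i ω ≤ s * b := by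
      calc ∑ i ∈ Finset.range s, d i ω ≤ ∑ _i ∈ Finset.range s, b :=
            Finset.sum_le_sum fun i _ => (abs_le.1 (h1 i)).2
        _ = s * b := by simp [mul_comm]
    have hV : 0 ≤ ∑ i ∈ Finset.range s, E i ω :=
      Finset.sum_nonneg fun i _ => h2 i
    have := mul_le_mul_of_nonneg_left hS hl.le
    nlinarith
  have hM_int : ∀ s, Integrable (M s) μ := by
    intro s
    refine ⟨(hM_meas s).aestronglyMeasurable, ?_⟩
    refine HasFiniteIntegral.of_bounded (C := Real.exp (l * b * s)) ?_
    filter_upwards [hM_bound s] with ω hω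
    rw [Real.norm_eq_abs, abs_of_pos (Real.exp_pos _)]
    exact hω
  have hstep : ∀ s, μ[M (s + 1) | ℱ s] ≤ᵐ[μ] M s := by
    intro s
    set G : Ω → ℝ := fun ω => M s ω * Real.exp (-c * E s ω) with hGdef
    set X : Ω → ℝ := fun ω => Real.exp (l * d s ω) with hXdef
    have hMsucc : M (s + 1) = G * X := by
      funext ω
      show Real.exp _ = M s ω * Real.exp (-c * E s ω) * Real.exp (l * d s ω)
      rw [hMdef]
      rw [← Real.exp_add, ← Real.exp_add, Finset.sum_range_succ, Finset.sum_range_succ]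
      congr 1
      ring
    have hG_meas : StronglyMeasurable[ℱ s] G :=
      (hM_adapted s).mul (Real.continuous_exp.comp_stronglyMeasurable
        (stronglyMeasurable_const.mul (hE_meas s)))
    have hX_int : Integrable X μ := by
      refine ⟨(Real.continuous_exp.comp_stronglyMeasurable
        (stronglyMeasurable_const.mul (hd_meas s))).aestronglyMeasurable, ?_⟩
      refine HasFiniteIntegral.of_bounded (C := Real.exp (l * b)) ?_
      filter_upwards [hbdd s] with ω hω
      rw [Real.norm_eq_abs, abs_of_pos (Real.exp_pos _)]
      exact Real.exp_le_exp.2 (mul_le_mul_of_nonneg_left ((abs_le.1 hω).2) hl.le)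
    have hGX_int : Integrable (G * X) μ := by rw [← hMsucc]; exact hM_int (s + 1)
    have hpull : μ[G * X | ℱ s] =ᵐ[μ] G * μ[X | ℱ s] :=
      condExp_mul_of_stronglyMeasurable_left hG_meas hGX_int hX_int
    set Y : Ω → ℝ := fun ω => 1 + l * d s ω + c * d s ω ^ 2 with hYdef
    have hXY : X ≤ᵐ[μ] Y := by
      filter_upwards [hbdd s] with ω hω
      have habs : |l * d s ω| ≤ l * b := by
        rw [abs_mul, abs_of_pos hl]
        exact mul_le_mul_of_nonneg_left hω hl.le
      have h3 := aux_exp3 habs hlb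
      have hcd : (l * d s ω) ^ 2 / (2 * (1 - l * b)) = c * d s ω ^ 2 := by
        rw [hcdef]; ring
      rw [hcd] at h3
      simpa [hXdef, hYdef] using h3
    have hY_int : Integrable Y μ :=
      ((integrable_const (1:ℝ)).add ((hint s).const_mul l)).add ((hd2_int s).const_mul c)
    have hcondXY : μ[X | ℱ s] ≤ᵐ[μ] μ[Y | ℱ s] := condExp_mono hX_int hY_int hXY
    have hYeq : Y = (fun _ => (1:ℝ)) + (l • d s + c • (fun ω => d s ω ^ 2)) := by
      funext ω
      simp only [hYdef, Pi.add_apply, Pi.smul_apply, smul_eq_mul]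
      ring
    have hYcond : μ[Y | ℱ s] =ᵐ[μ] fun ω => 1 + c * E s ω := by
      have e1 : μ[Y | ℱ s] =ᵐ[μ]
          μ[(fun _ => (1:ℝ)) | ℱ s] + μ[l • d s + c • (fun ω => d s ω ^ 2) | ℱ s] := by
        rw [hYeq]
        exact condExp_add (integrable_const _)
          (((hint s).smul l).add ((hd2_int s).smul c)) _
      have e2 : μ[l • d s + c • (fun ω => d s ω ^ 2) | ℱ s] =ᵐ[μ]
          μ[l • d s | ℱ s] + μ[c • (fun ω => d s ω ^ 2) | ℱ s] :=
        condExp_add ((hint s).smul l) ((hd2_int s).smul c) _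
      have e3 : μ[l • d s | ℱ s] =ᵐ[μ] l • μ[d s | ℱ s] := condExp_smul l (d s) _
      have e4 : μ[c • (fun ω => d s ω ^ 2) | ℱ s] =ᵐ[μ] c • E s := condExp_smul c _ _
      have e5 : μ[(fun _ => (1:ℝ)) | ℱ s] = fun _ => (1:ℝ) := condExp_const (ℱ.le s) 1
      filter_upwards [e1, e2, e3, e4, hmds s] with ω h1 h2 h3 h4 h5
      rw [h1]
      simp only [Pi.add_apply, e5, h2, h3, h4, Pi.smul_apply, smul_eq_mul, h5]
      simp [h5]
    have hG_nonneg : ∀ ω, 0 ≤ G ω := fun ω =>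
      mul_nonneg (Real.exp_pos _).le (Real.exp_pos _).le
    have hpull' : μ[M (s + 1) | ℱ s] =ᵐ[μ] G * μ[X | ℱ s] := by rw [hMsucc]; exact hpull
    filter_upwards [hpull', hcondXY, hYcond] with ω h1 h2 h3
    rw [h1]
    have step1 : G ω * (μ[X | ℱ s]) ω ≤ G ω * (1 + c * E s ω) := by
      apply mul_le_mul_of_nonneg_left _ (hG_nonneg ω)
      rw [← h3]
      exact h2
    have step2 : G ω * (1 + c * E s ω) ≤ G ω * Real.exp (c * E s ω) := by
      apply mul_le_mul_of_nonneg_left _ (hG_nonneg ω)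
      linarith [Real.add_one_le_exp (c * E s ω)]
    have step3 : G ω * Real.exp (c * E s ω) = M s ω := by
      rw [hGdef, mul_assoc, ← Real.exp_add]
      simp
    calc (G * μ[X | ℱ s]) ω = G ω * (μ[X | ℱ s]) ω := rfl
      _ ≤ G ω * (1 + c * E s ω) := step1
      _ ≤ G ω * Real.exp (c * E s ω) := step2
      _ = M s ω := step3
  have hsuper : Supermartingale M ℱ μ := supermartingale_nat hM_adapted hM_int hstep
  have hM_nonneg : ∀ s, 0 ≤ᵐ[μ] M s := fun s => ae_of_all _ fun ω => (Real.exp_pos _).le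
  have hM0 : ∫ ω, M 0 ω ∂μ = 1 := by
    simp [hMdef]
  have hmax := supermartingale_maximal hsuper hM_nonneg T
      (ε := Real.exp (l * a - c * v)) (Real.exp_pos _)
  rw [hM0] at hmax
  have hsubset : {ω | ∃ s ≤ T, a ≤ ∑ i ∈ Finset.range s, d i ω ∧
        (∑ i ∈ Finset.range s, (μ[(fun ω' => (d i ω') ^ 2) | ℱ i]) ω) ≤ v} ⊆
      {ω | ∃ s ≤ T, Real.exp (l * a - c * v) ≤ M s ω} := by
    rintro ω ⟨s, hsT, hS, hV⟩
    refine ⟨s, hsT, ?_⟩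
    apply Real.exp_le_exp.2
    have h1 : l * a ≤ l * ∑ i ∈ Finset.range s, d i ω := mul_le_mul_of_nonneg_left hS hl.le
    have h2 : c * ∑ i ∈ Finset.range s, E i ω ≤ c * v := mul_le_mul_of_nonneg_left hV hc.le
    linarith
  have hexp_eq : Real.exp (-(l * a - c * v)) = Real.exp (-a ^ 2 / (2 * (v + b * a))) := by
    congr 1
    rw [hcdef, hldef]
    have h1 : (1 : ℝ) - a / (v + b * a) * b = v / (v + b * a) := by
      field_simp
      ring
    rw [h1]
    field_simp
    ring
  calc μ {ω | ∃ s ≤ T, a ≤ ∑ i ∈ Finset.range s, d i ω ∧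
        (∑ i ∈ Finset.range s, (μ[(fun ω' => (d i ω') ^ 2) | ℱ i]) ω) ≤ v}
      ≤ μ {ω | ∃ s ≤ T, Real.exp (l * a - c * v) ≤ M s ω} := measure_mono hsubset
    _ ≤ ENNReal.ofReal (Real.exp (-a ^ 2 / (2 * (v + b * a)))) := by
        rw [← hexp_eq]
        have hfin : μ {ω | ∃ s ≤ T, Real.exp (l * a - c * v) ≤ M s ω} ≠ ⊤ := measure_ne_top _ _
        rw [← ENNReal.ofReal_toReal hfin]
        apply ENNReal.ofReal_le_ofReal
        rw [Real.exp_neg]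
        rw [← le_div_iff₀' (Real.exp_pos _)] at hmax
        simpa [one_div] using hmax
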